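/- Let κ and θ be cardinals and λ an infinite cardinal, and suppose that every commutative cancellative semigroup of cardinality κ satisfies G ↛ [λ]^{FS₂}_θ. Then for every commutative cancellative semigroup G of cardinality κ there exists a single colouring c : G → θ that simultaneously witnesses G ↛ [λ]^{FSₙ}_θ for all integers n ≥ 2; that is, for every integer n ≥ 2, every X ⊆ G of cardinality λ, and every δ < θ, there are n pairwise distinct elements x₁, …, xₙ ∈ X with c(x₁ + ⋯ + xₙ) = δ. -/

import Mathlib

open Cardinal

universe u

/-- Sum of `n+1` elements of an additive commutative semigroup. -/
def sgSum {G : Type*} [AddCommSemigroup G] : (n : ℕ) → (Fin (n + 1) → G) → G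
  | 0, x => x 0
  | n + 1, x => sgSum n (fun i => x i.castSucc) + x (Fin.last (n + 1))

section SgSumAux

variable {G : Type*} [AddCommSemigroup G]

lemma sgSum_snoc (n : ℕ) (f : Fin (n + 1) → G) (x : G) :
    sgSum (n + 1) (Fin.snoc f x) = sgSum n f + x := by
  show sgSum n (fun i => (Fin.snoc f x : Fin (n + 2) → G) i.castSucc) +
      (Fin.snoc f x : Fin (n + 2) → G) (Fin.last (n + 1)) = _
  rw [Fin.snoc_last]
  congr 1
  exact congrArg (sgSum n) (funext fun i => Fin.snoc_castSucc (α := fun _ => G) x f i)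

lemma snoc_inj {α : Type*} {n : ℕ} {f : Fin n → α} {x : α}
    (hf : Function.Injective f) (hx : x ∉ Set.range f) :
    Function.Injective (Fin.snoc f x : Fin (n + 1) → α) := by
  intro i j h
  induction i using Fin.lastCases with
  | last =>
    induction j using Fin.lastCases with
    | last => rfl
    | cast j =>
      rw [Fin.snoc_last, Fin.snoc_castSucc] at h
      exact absurd ⟨j, h.symm⟩ hx
  | cast i =>
    induction j using Fin.lastCases with
    | last =>
      rw [Fin.snoc_last, Fin.snoc_castSucc] at h
      exact absurd ⟨i, h⟩ hx
    | cast j =>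
      rw [Fin.snoc_castSucc, Fin.snoc_castSucc] at h
      exact congrArg Fin.castSucc (hf h)

end SgSumAux

section Groth

variable (G : Type u) [AddCommSemigroup G]

/-- The Grothendieck-style relation on pairs. -/
def grothSetoid : Setoid (G × G) where
  r p q := ∃ t, p.1 + q.2 + t = q.1 + p.2 + t
  iseqv := by
    constructor
    · exact fun p => ⟨p.1, rfl⟩
    · rintro p q ⟨t, ht⟩; exact ⟨t, ht.symm⟩
    · rintro p q r ⟨t, ht⟩ ⟨s, hs⟩
      refine ⟨q.2 + t + s + q.1, ?_⟩
      have h1 : p.1 + r.2 + (q.2 + t + s + q.1) = (p.1 + q.2 + t) + (q.1 + r.2 + s) := by ac_rfl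
      have h2 : (q.1 + p.2 + t) + (r.1 + q.2 + s) = r.1 + p.2 + (q.2 + t + s + q.1) := by ac_rfl
      rw [h1, ht, hs, h2]

/-- Grothendieck group of a commutative semigroup (as a quotient of pairs). -/
def Groth : Type u := Quotient (grothSetoid G)

variable {G}

def Groth.mk (p : G × G) : Groth G := Quotient.mk (grothSetoid G) p

noncomputable def gadd : Groth G → Groth G → Groth G :=
  Quotient.map₂ (fun p q => (p.1 + q.1, p.2 + q.2)) (by
    rintro p p' ⟨t, ht⟩ q q' ⟨s, hs⟩
    refine ⟨t + s, ?_⟩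
    dsimp only
    have h1 : p.1 + q.1 + (p'.2 + q'.2) + (t + s) = (p.1 + p'.2 + t) + (q.1 + q'.2 + s) := by ac_rfl
    have h2 : (p'.1 + p.2 + t) + (q'.1 + q.2 + s) = p'.1 + q'.1 + (p.2 + q.2) + (t + s) := by ac_rfl
    rw [h1, ht, hs, h2])

lemma gadd_mk (p q : G × G) :
    gadd (Groth.mk p) (Groth.mk q) = Groth.mk (p.1 + q.1, p.2 + q.2) := rfl

noncomputable def gneg : Groth G → Groth G :=
  Quotient.map (fun p => (p.2, p.1)) (by
    rintro p q ⟨t, ht⟩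
    refine ⟨t, ?_⟩
    dsimp only
    have h1 : p.2 + q.1 + t = q.1 + p.2 + t := by ac_rfl
    have h2 : p.1 + q.2 + t = q.2 + p.1 + t := by ac_rfl
    rw [h1, ← ht, h2])

lemma gneg_mk (p : G × G) : gneg (Groth.mk p) = Groth.mk (p.2, p.1) := rfl

noncomputable instance : Add (Groth G) := ⟨gadd⟩
noncomputable instance : Neg (Groth G) := ⟨gneg⟩

lemma add_mk' (p q : G × G) :
    Groth.mk p + Groth.mk q = Groth.mk (p.1 + q.1, p.2 + q.2) := rfl

lemma neg_mk' (p : G × G) : -(Groth.mk p) = Groth.mk (p.2, p.1) := rfl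

variable [Nonempty G]

noncomputable instance : Zero (Groth G) :=
  ⟨Groth.mk (Classical.arbitrary G, Classical.arbitrary G)⟩

lemma zero_def' : (0 : Groth G) = Groth.mk (Classical.arbitrary G, Classical.arbitrary G) := rfl

noncomputable instance : AddCommGroup (Groth G) where
  add := (· + ·)
  add_assoc := by
    intro x y z
    refine Quotient.inductionOn₃ x y z fun a b c => ?_
    show Groth.mk a + Groth.mk b + Groth.mk c = Groth.mk a + (Groth.mk b + Groth.mk c)
    rw [add_mk', add_mk', add_mk', add_mk']
    refine Quotient.sound ⟨a.1, ?_⟩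
    dsimp only
    ac_rfl
  zero := 0
  zero_add := by
    intro x
    refine Quotient.inductionOn x fun a => ?_
    show (0 : Groth G) + Groth.mk a = Groth.mk a
    rw [zero_def', add_mk']
    refine Quotient.sound ⟨a.1, ?_⟩
    dsimp only
    ac_rfl
  add_zero := by
    intro x
    refine Quotient.inductionOn x fun a => ?_
    show Groth.mk a + (0 : Groth G) = Groth.mk a
    rw [zero_def', add_mk']
    refine Quotient.sound ⟨a.1, ?_⟩
    dsimp only
    ac_rfl
  nsmul := nsmulRec
  zsmul := zsmulRec
  neg := (- ·)
  neg_add_cancel := by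
    intro x
    refine Quotient.inductionOn x fun a => ?_
    show -(Groth.mk a) + Groth.mk a = (0 : Groth G)
    rw [neg_mk', add_mk', zero_def']
    refine Quotient.sound ⟨a.1, ?_⟩
    dsimp only
    ac_rfl
  add_comm := by
    intro x y
    refine Quotient.inductionOn₂ x y fun a b => ?_
    show Groth.mk a + Groth.mk b = Groth.mk b + Groth.mk a
    rw [add_mk', add_mk']
    refine Quotient.sound ⟨a.1, ?_⟩
    dsimp only
    ac_rfl

/-- The canonical map `G → Groth G`. -/
noncomputable def grothEmb (a : G) : Groth G :=
  Groth.mk (a + Classical.arbitrary G, Classical.arbitrary G)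

lemma grothEmb_add (a b : G) : grothEmb (a + b) = grothEmb a + grothEmb b := by
  show _ = Groth.mk _ + Groth.mk _
  rw [add_mk']
  refine Quotient.sound ⟨a, ?_⟩
  dsimp only
  ac_rfl

lemma grothEmb_injective (hcancel : ∀ a b c : G, a + c = b + c → a = b) :
    Function.Injective (grothEmb (G := G)) := by
  intro a b h
  obtain ⟨t, ht⟩ := Quotient.exact h
  dsimp at ht
  set g₀ := Classical.arbitrary G
  have h1 : a + g₀ + g₀ + t = a + (g₀ + g₀ + t) := by ac_rfl
  have h2 : b + g₀ + g₀ + t = b + (g₀ + g₀ + t) := by ac_rfl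
  exact hcancel a b _ (by rw [← h1, ← h2]; exact ht)

lemma groth_card_le : #(Groth G) ≤ #G * #G := by
  calc #(Groth G) ≤ #(G × G) := Cardinal.mk_quotient_le
    _ = #G * #G := by rw [Cardinal.mk_prod]; simp

end Groth

section Div

variable (A : Type u) [AddCommGroup A]

/-- The evaluation hom from the free module. -/
noncomputable def divPhi : (A →₀ ℤ) →+ A :=
  Finsupp.liftAddHom fun a => (zmultiplesHom A) a

/-- Inclusion of integer finsupps into rational finsupps. -/
noncomputable def divIncl : (A →₀ ℤ) →+ (A →₀ ℚ) :=
  Finsupp.mapRange.addMonoidHom (Int.castAddHom ℚ)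

lemma divIncl_injective : Function.Injective (divIncl A) :=
  Finsupp.mapRange_injective _ (by simp) (fun x y h => by simpa using h)

noncomputable def divRel : AddSubgroup (A →₀ ℚ) :=
  ((divPhi A).ker).map (divIncl A)

/-- A `2`-divisible abelian group containing `A`. -/
def DivHull : Type u := (A →₀ ℚ) ⧸ divRel A

noncomputable instance : AddCommGroup (DivHull A) :=
  QuotientAddGroup.Quotient.addCommGroup (divRel A)

/-- The embedding of `A` into its hull. -/
noncomputable def divEmb (a : A) : DivHull A :=
  QuotientAddGroup.mk (Finsupp.single a (1 : ℚ))

lemma divIncl_single (a : A) (n : ℤ) :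
    divIncl A (Finsupp.single a n) = Finsupp.single a (n : ℚ) := by
  simp [divIncl, Finsupp.mapRange.addMonoidHom, Finsupp.mapRange_single]
  exact Finsupp.mapRange_single

lemma divPhi_single (a : A) (n : ℤ) : divPhi A (Finsupp.single a n) = n • a := by
  simp [divPhi]

lemma divEmb_add (a b : A) : divEmb A (a + b) = divEmb A a + divEmb A b := by
  show _ = QuotientAddGroup.mk _ + QuotientAddGroup.mk _
  erw [← QuotientAddGroup.mk_add]
  refine (QuotientAddGroup.eq).2 ?_
  refine AddSubgroup.mem_map.2
    ⟨Finsupp.single (a + b) (-1) + (Finsupp.single a 1 + Finsupp.single b 1), ?_, ?_⟩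
  · refine AddMonoidHom.mem_ker.2 ?_
    rw [map_add, map_add, divPhi_single, divPhi_single, divPhi_single]
    simp only [neg_smul, one_smul]
    abel
  · rw [map_add, map_add, divIncl_single, divIncl_single, divIncl_single]
    simp only [Int.cast_neg, Int.cast_one, Finsupp.single_neg]

lemma divEmb_injective : Function.Injective (divEmb A) := by
  intro a b h
  obtain ⟨z, hz, hze⟩ := AddSubgroup.mem_map.1 ((QuotientAddGroup.eq).1 h)
  have hz' : z = Finsupp.single a (-1) + Finsupp.single b 1 := by
    apply divIncl_injective A
    rw [hze, map_add, divIncl_single, divIncl_single]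
    simp only [Int.cast_neg, Int.cast_one, Finsupp.single_neg]
  rw [hz'] at hz
  have h0 : divPhi A (Finsupp.single a (-1) + Finsupp.single b 1) = 0 :=
    AddMonoidHom.mem_ker.1 hz
  rw [map_add, divPhi_single, divPhi_single] at h0
  simp only [neg_smul, one_smul] at h0
  exact (neg_add_eq_zero.1 h0)

lemma divHull_half (d : DivHull A) : ∃ h : DivHull A, h + h = d := by
  obtain ⟨f, rfl⟩ := Quotient.exists_rep d
  have hf : ((2:ℚ)⁻¹ • f) + ((2:ℚ)⁻¹ • f) = f := by rw [← add_smul]; norm_num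
  refine ⟨QuotientAddGroup.mk ((2:ℚ)⁻¹ • f), ?_⟩
  erw [← QuotientAddGroup.mk_add, hf]

lemma divHull_card_le [Infinite A] : #(DivHull A) ≤ max #A ℵ₀ := by
  calc #(DivHull A) ≤ #(A →₀ ℚ) := Cardinal.mk_quotient_le
    _ = max (Cardinal.lift.{0} #A) (Cardinal.lift.{u} #ℚ) :=
        Cardinal.mk_finsupp_lift_of_infinite A ℚ
    _ = max #A ℵ₀ := by rw [Cardinal.lift_uzero, Cardinal.mkRat, Cardinal.lift_aleph0]

end Div

section Key

variable {G : Type u} [AddCommSemigroup G] {D : Type u} [AddCommGroup D]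

lemma key_shift (ι : G → D) (hι : ∀ a b : G, ι (a + b) = ι a + ι b)
    (half : ∀ d : D, ∃ h : D, h + h = d) :
    ∀ (n : ℕ) (a' : Fin n → G), ∃ t : D, ∀ xi xj : G,
      (ι xi + t) + (ι xj + t) = ι (sgSum (n + 1) (Fin.snoc (Fin.snoc a' xi) xj))
  | 0, a' => by
    refine ⟨0, fun xi xj => ?_⟩
    have h1 : sgSum 1 (Fin.snoc (Fin.snoc a' xi) xj) = sgSum 0 (Fin.snoc a' xi) + xj :=
      sgSum_snoc 0 _ _
    have h2 : sgSum 0 (Fin.snoc a' xi : Fin 1 → G) = xi := by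
      show (Fin.snoc a' xi : Fin 1 → G) 0 = xi
      exact Fin.snoc_last _ _
    rw [h1, h2, hι, add_zero, add_zero]
  | m + 1, a' => by
    obtain ⟨t, ht⟩ := half (ι (sgSum m a'))
    refine ⟨t, fun xi xj => ?_⟩
    rw [sgSum_snoc (m + 1) _ xj, sgSum_snoc m a' xi, hι, hι, ← ht]
    abel

end Key

theorem stmt_15 (κ lam θ : Cardinal.{u}) (hlam : ℵ₀ ≤ lam)
    (hyp : ∀ (H : Type u) [AddCommSemigroup H],
      (∀ a b c : H, a + c = b + c → a = b) → Cardinal.mk H = κ →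
      ∃ c : H → θ.ord.ToType,
        ∀ X : Set H, Cardinal.mk X = lam →
          ∀ δ : θ.ord.ToType, ∃ x ∈ X, ∃ y ∈ X, x ≠ y ∧ c (x + y) = δ)
    (G : Type u) [AddCommSemigroup G]
    (hcancel : ∀ a b c : G, a + c = b + c → a = b)
    (hcard : Cardinal.mk G = κ) :
    ∃ c : G → θ.ord.ToType,
      ∀ (n : ℕ) (X : Set G), Cardinal.mk X = lam →
        ∀ δ : θ.ord.ToType,
          ∃ x : Fin (n + 2) → G, Function.Injective x ∧
            (∀ i, x i ∈ X) ∧ c (sgSum (n + 1) x) = δ := by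
  by_cases hGlam : lam ≤ #G
  case neg =>
    obtain ⟨c, -⟩ := hyp G hcancel hcard
    refine ⟨c, fun n X hX δ => absurd ?_ hGlam⟩
    exact hX ▸ Cardinal.mk_set_le X
  case pos =>
    have hG0 : ℵ₀ ≤ #G := hlam.trans hGlam
    haveI : Infinite G := Cardinal.infinite_iff.2 hG0
    haveI : Nonempty G := inferInstance
    -- the divisible hull of the Grothendieck group
    set A := Groth G with hA
    haveI : Infinite A := Infinite.of_injective _ (grothEmb_injective hcancel)
    set D := DivHull A with hD
    set ι : G → D := fun g => divEmb A (grothEmb g) with hιdef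
    have hι : ∀ a b : G, ι (a + b) = ι a + ι b := fun a b => by
      rw [hιdef]; dsimp only; rw [grothEmb_add, divEmb_add]
    have hιinj : Function.Injective ι :=
      (divEmb_injective A).comp (grothEmb_injective hcancel)
    have hκ : ℵ₀ ≤ κ := hcard ▸ hG0
    have hDcard : #D = κ := by
      apply le_antisymm
      · calc #D ≤ max #A ℵ₀ := divHull_card_le A
          _ ≤ max (#G * #G) ℵ₀ := by
              exact max_le_max_right _ (groth_card_le)
          _ = κ := by
              rw [Cardinal.mul_eq_self hG0, hcard]
              exact max_eq_left hκ
      · rw [← hcard]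
        exact Cardinal.mk_le_of_injective hιinj
    obtain ⟨c', hc'⟩ := hyp D (fun a b c h => add_right_cancel h) hDcard
    refine ⟨fun g => c' (ι g), fun n X hX δ => ?_⟩
    haveI hXinf : Infinite X := Cardinal.infinite_iff.2 (hlam.trans_eq hX.symm)
    set e := Infinite.natEmbedding X with he
    set a' : Fin n → G := fun k => (e k : G) with ha'
    have ha'mem : ∀ k, a' k ∈ X := fun k => (e k).2
    have ha'inj : Function.Injective a' := by
      intro i j h
      have h2 : ((i : ℕ) : ℕ) = (j : ℕ) := e.injective (Subtype.ext h)
      exact Fin.ext h2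
    obtain ⟨t, ht⟩ := key_shift ι hι (divHull_half A) n a'
    set X' : Set G := X \ Set.range a' with hX'def
    have hX'card : #X' = lam := by
      apply le_antisymm
      · exact hX ▸ Cardinal.mk_le_mk_of_subset Set.diff_subset
      · by_contra hlt
        push_neg at hlt
        have hsub : X ⊆ X' ∪ Set.range a' := by
          intro x hx
          by_cases hr : x ∈ Set.range a'
          · exact Or.inr hr
          · exact Or.inl ⟨hx, hr⟩
        have h1 : lam ≤ #(X' ∪ Set.range a' : Set G) :=
          hX ▸ Cardinal.mk_le_mk_of_subset hsub
        have h2 : #(X' ∪ Set.range a' : Set G) ≤ #X' + #(Set.range a') :=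
          Cardinal.mk_union_le _ _
        have h3 : #(Set.range a') < lam :=
          lt_of_lt_of_le (Cardinal.lt_aleph0_of_finite _) hlam
        have := Cardinal.add_lt_of_lt hlam hlt h3
        exact absurd (h1.trans h2) (not_le.2 this)
    set f : G → D := fun x => ι x + t with hf
    have hfinj : Function.Injective f := fun x y h => by
      apply hιinj
      exact add_right_cancel (hf ▸ h)
    have hYcard : #(f '' X') = lam := by
      rw [Cardinal.mk_image_eq hfinj]; exact hX'card
    obtain ⟨u, hu, v, hv, huv, hcuv⟩ := hc' (f '' X') hYcard δ
    obtain ⟨xi, hxi, rfl⟩ := hu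
    obtain ⟨xj, hxj, rfl⟩ := hv
    have hne : xi ≠ xj := fun h => huv (by rw [h])
    have hxjr : xj ∉ Set.range (Fin.snoc a' xi : Fin (n + 1) → G) := by
      rintro ⟨k, hk⟩
      induction k using Fin.lastCases with
      | last => rw [Fin.snoc_last] at hk; exact hne hk
      | cast k => rw [Fin.snoc_castSucc] at hk; exact hxj.2 ⟨k, hk⟩
    refine ⟨Fin.snoc (Fin.snoc a' xi) xj, ?_, ?_, ?_⟩
    · exact snoc_inj (snoc_inj ha'inj hxi.2) hxjr
    · intro i
      induction i using Fin.lastCases with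
      | last => rw [Fin.snoc_last]; exact hxj.1
      | cast i =>
        rw [Fin.snoc_castSucc]
        induction i using Fin.lastCases with
        | last => rw [Fin.snoc_last]; exact hxi.1
        | cast i => rw [Fin.snoc_castSucc]; exact ha'mem i
    · show c' (ι (sgSum (n + 1) (Fin.snoc (Fin.snoc a' xi) xj))) = δ
      rw [← ht xi xj]
      exact hcuv
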